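/- Let H = -i Σ_{μ,ν} α_{μν} c_μ c_ν where α is a real antisymmetric 2n×2n matrix and the c_μ satisfy the Clifford relations {c_μ, c_ν} = 2δ_{μν}I. Then for U = e^{iH} and every μ, U† c_μ U = Σ_ν R_{μν} c_ν where R = e^{4α} is a matrix in SO(2n). -/

import Mathlib

open NormedSpace Matrix

theorem exp_clm_apply' {E : Type*} [NormedAddCommGroup E] [NormedSpace ℂ E] [CompleteSpace E]
    (T : E →L[ℂ] E) (x : E) :
    exp T x = ∑' k : ℕ, ((k.factorial : ℂ))⁻¹ • (T ^ k) x := by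
  have h := (exp_series_hasSum_exp' (𝕂 := ℂ) T).mapL (ContinuousLinearMap.apply ℂ E x)
  simpa using h.tsum_eq.symm

theorem exp_lr {E : Type*} [NormedRing E] [NormedAlgebra ℂ E] [CompleteSpace E] (a b x : E) :
    exp (ContinuousLinearMap.mul ℂ E a + (ContinuousLinearMap.mul ℂ E).flip b) x
      = exp a * x * exp b := by
  have hcomm : Commute (ContinuousLinearMap.mul ℂ E a) ((ContinuousLinearMap.mul ℂ E).flip b) := by
    apply ContinuousLinearMap.ext
    intro y
    simp [mul_assoc]
  have hLk : ∀ (k : ℕ) (y : E), ((ContinuousLinearMap.mul ℂ E a) ^ k) y = a ^ k * y := by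
    intro k
    induction k with
    | zero => simp
    | succ k ih => intro y; rw [pow_succ', ContinuousLinearMap.mul_apply, ih, pow_succ', mul_assoc]; simp
  have hRk : ∀ (k : ℕ) (y : E), (((ContinuousLinearMap.mul ℂ E).flip b) ^ k) y = y * b ^ k := by
    intro k
    induction k with
    | zero => simp
    | succ k ih => intro y; rw [pow_succ', ContinuousLinearMap.mul_apply, ih, pow_succ, ← mul_assoc]; simp
  have hL : ∀ y : E, exp (ContinuousLinearMap.mul ℂ E a) y = exp a * y := by
    intro y
    rw [exp_clm_apply']
    have h := (exp_series_hasSum_exp' (𝕂 := ℂ) a).mapL ((ContinuousLinearMap.mul ℂ E).flip y)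
    simp only [ContinuousLinearMap.flip_apply, ContinuousLinearMap.mul_apply',
      ContinuousLinearMap.map_smul] at h
    rw [← h.tsum_eq]
    exact tsum_congr fun k => by simp [hLk, smul_mul_assoc]
  have hR : ∀ y : E, exp ((ContinuousLinearMap.mul ℂ E).flip b) y = y * exp b := by
    intro y
    rw [exp_clm_apply']
    have h := (exp_series_hasSum_exp' (𝕂 := ℂ) b).mapL (ContinuousLinearMap.mul ℂ E y)
    simp only [ContinuousLinearMap.mul_apply', ContinuousLinearMap.map_smul] at h
    rw [← h.tsum_eq]
    exact tsum_congr fun k => by rw [hRk]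
  rw [NormedSpace.exp_add_of_commute_of_mem_ball (𝕂 := ℂ) hcomm
    ((expSeries_radius_eq_top ℂ (E →L[ℂ] E)).symm ▸ edist_lt_top _ _)
    ((expSeries_radius_eq_top ℂ (E →L[ℂ] E)).symm ▸ edist_lt_top _ _), ContinuousLinearMap.mul_apply, hR, hL, mul_assoc]

theorem exp_clm_sum {E : Type*} [NormedRing E] [NormedAlgebra ℂ E] [CompleteSpace E]
    {N : ℕ} (T : E →L[ℂ] E) (c : Fin N → E) (β : Matrix (Fin N) (Fin N) ℂ)
    (h : ∀ μ, T (c μ) = ∑ ν, β μ ν • c ν) (μ : Fin N) :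
    exp T (c μ) = ∑ ν, (exp β) μ ν • c ν := by
  letI : SeminormedRing (Matrix (Fin N) (Fin N) ℂ) := Matrix.linftyOpSemiNormedRing
  letI : NormedRing (Matrix (Fin N) (Fin N) ℂ) := Matrix.linftyOpNormedRing
  letI : NormedAlgebra ℂ (Matrix (Fin N) (Fin N) ℂ) := Matrix.linftyOpNormedAlgebra
  have hiter : ∀ (k : ℕ) (ρ : Fin N), (T ^ k) (c ρ) = ∑ ν, (β ^ k) ρ ν • c ν := by
    intro k
    induction k with
    | zero => intro ρ; simp [Matrix.one_apply, ite_smul, Finset.sum_ite_eq]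
    | succ k ih =>
      intro ρ
      rw [pow_succ', ContinuousLinearMap.mul_apply, ih, map_sum]
      simp only [ContinuousLinearMap.map_smul, h, Finset.smul_sum, smul_smul]
      rw [Finset.sum_comm]
      refine Finset.sum_congr rfl fun ν _ => ?_
      rw [pow_succ, Matrix.mul_apply, Finset.sum_smul]
  have hent : ∀ ν, HasSum (fun k : ℕ => ((k.factorial : ℂ))⁻¹ * (β ^ k) μ ν) ((exp β) μ ν) := by
    intro ν
    let ev : Matrix (Fin N) (Fin N) ℂ →ₗ[ℂ] ℂ :=
      { toFun := fun M => M μ ν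
        map_add' := fun _ _ => rfl
        map_smul' := fun _ _ => rfl }
    have := (exp_series_hasSum_exp' (𝕂 := ℂ) β).mapL (LinearMap.toContinuousLinearMap ev)
    exact this
  rw [exp_clm_apply']
  have : (fun k : ℕ => ((k.factorial : ℂ))⁻¹ • (T ^ k) (c μ))
      = fun k : ℕ => ∑ ν, (((k.factorial : ℂ))⁻¹ * (β ^ k) μ ν) • c ν := by
    funext k
    rw [hiter k μ, Finset.smul_sum]
    exact Finset.sum_congr rfl fun ν _ => by rw [smul_smul]
  rw [this, Summable.tsum_finsetSum fun ν _ => ((hent ν).summable.smul_const (c ν))]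
  exact Finset.sum_congr rfl fun ν _ => by rw [Summable.tsum_smul_const (hent ν).summable, (hent ν).tsum_eq]

theorem exp_map_ofReal {N : ℕ} (M : Matrix (Fin N) (Fin N) ℝ) :
    (exp M).map Complex.ofReal = exp (M.map Complex.ofReal) := by
  letI : SeminormedRing (Matrix (Fin N) (Fin N) ℝ) := Matrix.linftyOpSemiNormedRing
  letI : NormedRing (Matrix (Fin N) (Fin N) ℝ) := Matrix.linftyOpNormedRing
  letI : NormedAlgebra ℝ (Matrix (Fin N) (Fin N) ℝ) := Matrix.linftyOpNormedAlgebra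
  letI : NormedAlgebra ℚ (Matrix (Fin N) (Fin N) ℝ) := Matrix.linftyOpNormedAlgebra
  letI : SeminormedRing (Matrix (Fin N) (Fin N) ℂ) := Matrix.linftyOpSemiNormedRing
  letI : NormedRing (Matrix (Fin N) (Fin N) ℂ) := Matrix.linftyOpNormedRing
  letI : NormedAlgebra ℝ (Matrix (Fin N) (Fin N) ℂ) := Matrix.linftyOpNormedAlgebra
  have hcont : Continuous fun A : Matrix (Fin N) (Fin N) ℝ => A.map Complex.ofReal :=
    Continuous.matrix_map continuous_id Complex.continuous_ofReal
  have h := map_exp (Complex.ofRealHom.mapMatrix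
    : Matrix (Fin N) (Fin N) ℝ →+* Matrix (Fin N) (Fin N) ℂ) hcont M
  have h2 : (exp M).map Complex.ofReal = exp (M.map Complex.ofReal) := h
  rw [h2]

/-- Let `c₁,…,c_{2n}` be Hermitian operators on a finite-dimensional Hilbert space
satisfying the Clifford relations, let `α` be a real antisymmetric `2n × 2n` matrix, and let
`H = -i Σ_{μν} α_{μν} c_μ c_ν` and `U = e^{iH}`.  Then `U† c_μ U = Σ_ν R_{μν} c_ν` where
`R = e^{4α}` is a matrix in `SO(2n)`. -/
theorem gaussian_conj_majorana (n d : ℕ)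
    (c : Fin (2 * n) → Matrix (Fin d) (Fin d) ℂ)
    (hherm : ∀ μ, (c μ).IsHermitian)
    (hc : ∀ μ ν, c μ * c ν + c ν * c μ =
      if μ = ν then (2 : ℂ) • (1 : Matrix (Fin d) (Fin d) ℂ) else 0)
    (α : Matrix (Fin (2 * n)) (Fin (2 * n)) ℝ) (hα : αᵀ = -α)
    (H : Matrix (Fin d) (Fin d) ℂ)
    (hH : H = (-Complex.I) • ∑ μ, ∑ ν, (α μ ν : ℂ) • (c μ * c ν))
    (U : Matrix (Fin d) (Fin d) ℂ) (hU : U = exp (Complex.I • H))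
    (R : Matrix (Fin (2 * n)) (Fin (2 * n)) ℝ) (hR : R = exp ((4 : ℝ) • α)) :
    (R * Rᵀ = 1 ∧ R.det = 1) ∧ ∀ μ, Uᴴ * c μ * U = ∑ ν, (R μ ν : ℂ) • c ν := by
  have hα' : ∀ μ ν, α ν μ = -α μ ν := by
    intro μ ν
    have := congrFun (congrFun hα μ) ν
    simpa [Matrix.transpose_apply] using this
  -- Part 1
  have hRt : Rᵀ = exp (-((4 : ℝ) • α)) := by
    rw [hR, ← Matrix.exp_transpose]
    congr 1
    rw [Matrix.transpose_smul, hα, smul_neg]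
  have hRRT : R * Rᵀ = 1 := by
    rw [hRt, hR, ← Matrix.exp_add_of_commute _ _ ((Commute.refl ((4 : ℝ) • α)).neg_right), add_neg_cancel,
      exp_zero]
  have hdet : R.det = 1 := by
    have h1 : R.det * R.det = 1 := by
      have := congrArg Matrix.det hRRT
      rwa [Matrix.det_mul, Matrix.det_transpose, Matrix.det_one] at this
    have h2 : R.det = Matrix.det (exp ((2 : ℝ) • α)) * Matrix.det (exp ((2 : ℝ) • α)) := by
      have h4 : (4 : ℝ) • α = (2 : ℝ) • α + (2 : ℝ) • α := by
        rw [← add_smul]; norm_num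
      rw [hR, h4, Matrix.exp_add_of_commute _ _ (Commute.refl _), Matrix.det_mul]
    nlinarith [h1, h2]
  refine ⟨⟨hRRT, hdet⟩, ?_⟩
  -- Part 2
  set A : Matrix (Fin d) (Fin d) ℂ := Complex.I • H with hAdef
  have hA : A = ∑ μ, ∑ ν, (α μ ν : ℂ) • (c μ * c ν) := by
    rw [hAdef, hH, smul_smul, mul_neg, Complex.I_mul_I, neg_neg, one_smul]
  set β : Matrix (Fin (2 * n)) (Fin (2 * n)) ℂ := ((4 : ℝ) • α).map Complex.ofReal with hβdef
  have hβ : ∀ μ ν, β μ ν = ((4 * α μ ν : ℝ) : ℂ) := by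
    intro μ ν
    simp [hβdef, Matrix.map_apply, Matrix.smul_apply, smul_eq_mul]
  -- the commutator computation
  have key : ∀ ρ μ ν, c ρ * (c μ * c ν) - (c μ * c ν) * c ρ =
      (if ρ = μ then (2 : ℂ) • c ν else 0) - (if ρ = ν then (2 : ℂ) • c μ else 0) := by
    intro ρ μ ν
    have e1 : c ρ * c μ = (if ρ = μ then (2 : ℂ) • (1 : Matrix (Fin d) (Fin d) ℂ) else 0)
        - c μ * c ρ := eq_sub_of_add_eq (hc ρ μ)
    have e2 : c ν * c ρ = (if ρ = ν then (2 : ℂ) • (1 : Matrix (Fin d) (Fin d) ℂ) else 0)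
        - c ρ * c ν := eq_sub_of_add_eq' (hc ρ ν)
    calc c ρ * (c μ * c ν) - (c μ * c ν) * c ρ
        = (c ρ * c μ) * c ν - c μ * (c ν * c ρ) := by rw [mul_assoc, mul_assoc]
      _ = ((if ρ = μ then (2 : ℂ) • (1 : Matrix (Fin d) (Fin d) ℂ) else 0) - c μ * c ρ) * c ν
          - c μ * ((if ρ = ν then (2 : ℂ) • (1 : Matrix (Fin d) (Fin d) ℂ) else 0)
            - c ρ * c ν) := by rw [e1, e2]
      _ = (if ρ = μ then (2 : ℂ) • c ν else 0) - (if ρ = ν then (2 : ℂ) • c μ else 0) := by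
          rw [sub_mul, mul_sub, ← mul_assoc]
          split_ifs <;> simp [smul_mul_assoc, mul_smul_comm] <;> abel
  have hcomm : ∀ ρ, c ρ * A - A * c ρ = ∑ ν, β ρ ν • c ν := by
    intro ρ
    have expand : c ρ * A - A * c ρ = ∑ μ, ∑ ν, (α μ ν : ℂ) •
        ((if ρ = μ then (2 : ℂ) • c ν else 0) - (if ρ = ν then (2 : ℂ) • c μ else 0)) := by
      rw [hA, Finset.mul_sum, Finset.sum_mul, ← Finset.sum_sub_distrib]
      refine Finset.sum_congr rfl fun μ _ => ?_
      rw [Finset.mul_sum, Finset.sum_mul, ← Finset.sum_sub_distrib]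
      refine Finset.sum_congr rfl fun ν _ => ?_
      rw [mul_smul_comm, smul_mul_assoc, ← smul_sub, key ρ μ ν]
    rw [expand]
    have h1 : ∀ μ : Fin (2 * n), ∑ ν, (α μ ν : ℂ) •
        ((if ρ = μ then (2 : ℂ) • c ν else 0) - (if ρ = ν then (2 : ℂ) • c μ else 0))
        = (if ρ = μ then ∑ ν, ((α μ ν : ℂ) * 2) • c ν else 0) - ((α μ ρ : ℂ) * 2) • c μ := by
      intro μ
      simp only [smul_sub]
      rw [Finset.sum_sub_distrib]
      congr 1
      · by_cases hm : ρ = μ <;> simp [hm, smul_smul]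
      · simp [smul_ite, smul_smul, Finset.sum_ite_eq]
    rw [Finset.sum_congr rfl fun μ _ => h1 μ, Finset.sum_sub_distrib, Finset.sum_ite_eq]
    simp only [Finset.mem_univ, if_true]
    rw [← Finset.sum_sub_distrib]
    refine Finset.sum_congr rfl fun ν _ => ?_
    rw [← sub_smul, hβ]
    congr 1
    rw [hα' ρ ν]
    push_cast
    ring
  -- Hermitian property of A
  have hAH : Aᴴ = -A := by
    rw [hA]
    rw [Matrix.conjTranspose_sum]
    simp only [Matrix.conjTranspose_sum, Matrix.conjTranspose_smul, Matrix.conjTranspose_mul,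
      (hherm _).eq, Complex.star_def, Complex.conj_ofReal]
    rw [Finset.sum_comm]
    have hcast : ∀ (μ ν : Fin (2 * n)), ((α ν μ : ℝ) : ℂ) = -((α μ ν : ℝ) : ℂ) := by
      intro μ ν; rw [hα']; push_cast; ring
    rw [← Finset.sum_neg_distrib]
    refine Finset.sum_congr rfl fun μ' _ => ?_
    rw [← Finset.sum_neg_distrib]
    refine Finset.sum_congr rfl fun ν' _ => ?_
    rw [hcast μ' ν', neg_smul]
  intro μ
  have hUA : U = exp A := hU
  have hUH : Uᴴ = exp (-A) := by
    rw [hUA, ← Matrix.exp_conjTranspose, hAH]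
  have key2 : exp (-A) * c μ * exp A = ∑ ν, exp β μ ν • c ν := by
    letI : SeminormedRing (Matrix (Fin d) (Fin d) ℂ) := Matrix.linftyOpSemiNormedRing
    letI : NormedRing (Matrix (Fin d) (Fin d) ℂ) := Matrix.linftyOpNormedRing
    letI : NormedAlgebra ℂ (Matrix (Fin d) (Fin d) ℂ) := Matrix.linftyOpNormedAlgebra
    have hT : ∀ ρ, (ContinuousLinearMap.mul ℂ (Matrix (Fin d) (Fin d) ℂ) (-A)
        + (ContinuousLinearMap.mul ℂ (Matrix (Fin d) (Fin d) ℂ)).flip A) (c ρ)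
        = ∑ ν, β ρ ν • c ν := by
      intro ρ
      have h := hcomm ρ
      rw [sub_eq_neg_add] at h
      simp only [ContinuousLinearMap.add_apply, ContinuousLinearMap.mul_apply',
        ContinuousLinearMap.flip_apply, neg_mul]
      exact h
    exact (exp_lr (-A) A (c μ)).symm.trans (exp_clm_sum _ c β hT μ)
  have hRe : ∀ ν, (R μ ν : ℂ) = exp β μ ν := by
    intro ν
    have h := congrFun (congrFun (exp_map_ofReal ((4 : ℝ) • α)) μ) ν
    rw [← hβdef, ← hR] at h
    simpa [Matrix.map_apply] using h
  rw [hUH, hUA, key2]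
  exact Finset.sum_congr rfl fun ν _ => by rw [hRe ν]
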